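/- arXiv:2111.10246 — 4 statements merged into one kernel-verified Lean document; each statement's English description precedes it below -/
import Mathlib

section
/- Let H ∈ ℝ^{m×n}, Q, R, S symmetric positive definite, W = HᵀQH + R + S. The ILC update map u ↦ W^{-1}(HᵀQ(r - w) + Ru) is a contraction on ℝ^n with respect to the norm ‖x‖_W = √(xᵀWx); specifically ‖W^{-1}R‖_W < 1. -/
open Matrix

section Aux

variable {n : ℕ}

private lemma quad_form_eq (B W : Matrix (Fin n) (Fin n) ℝ) (v w : Fin n → ℝ) :
    (B *ᵥ v) ⬝ᵥ (W *ᵥ (B *ᵥ w)) = v ⬝ᵥ ((Bᵀ * W * B) *ᵥ w) := by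
  simp only [dotProduct_mulVec, ← vecMul_vecMul, vecMul_transpose]

private lemma cont_quad (A : Matrix (Fin n) (Fin n) ℝ) :
    Continuous fun x : Fin n → ℝ => x ⬝ᵥ A *ᵥ x := by
  simp only [dotProduct, mulVec]
  exact continuous_finset_sum _ fun i _ => (continuous_apply i).mul
    (continuous_finset_sum _ fun j _ => continuous_const.mul (continuous_apply j))

private lemma symm_swap {A : Matrix (Fin n) (Fin n) ℝ} (hA : Aᵀ = A) (x y : Fin n → ℝ) :
    x ⬝ᵥ A *ᵥ y = y ⬝ᵥ A *ᵥ x := by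
  rw [dotProduct_mulVec, ← mulVec_transpose, hA, dotProduct_comm]

private lemma aux_strict {W R : Matrix (Fin n) (Fin n) ℝ} (hW : W.PosDef) (hR : R.PosDef)
    (hD : (W - R).PosDef) {x : Fin n → ℝ} (hx : x ≠ 0) :
    (W⁻¹ *ᵥ R *ᵥ x) ⬝ᵥ W *ᵥ (W⁻¹ *ᵥ R *ᵥ x) < x ⬝ᵥ W *ᵥ x := by
  set y := W⁻¹ *ᵥ R *ᵥ x with hy
  have hWy : W *ᵥ y = R *ᵥ x := by
    rw [hy, mulVec_mulVec, mul_nonsing_inv W hW.det_pos.ne'.isUnit, one_mulVec]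
  have hRsymm : Rᵀ = R := by have := hR.isHermitian.eq; simpa using this
  have h1 : 0 ≤ (x - y) ⬝ᵥ R *ᵥ (x - y) := by
    have := hR.posSemidef.dotProduct_mulVec_nonneg (x - y)
    simpa using this
  have h2 : 0 ≤ y ⬝ᵥ (W - R) *ᵥ y := by
    have := hD.posSemidef.dotProduct_mulVec_nonneg y
    simpa using this
  have h3 : 0 < x ⬝ᵥ (W - R) *ᵥ x := by
    have := hD.dotProduct_mulVec_pos hx
    simpa using this
  have e1 : x ⬝ᵥ R *ᵥ y = y ⬝ᵥ R *ᵥ x := symm_swap hRsymm x y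
  have e2 : y ⬝ᵥ W *ᵥ y = y ⬝ᵥ R *ᵥ x := by rw [hWy]
  rw [sub_dotProduct, mulVec_sub, dotProduct_sub, dotProduct_sub] at h1
  rw [sub_mulVec, dotProduct_sub] at h2 h3
  linarith

end Aux

theorem stmt_4 {m n : ℕ} (H : Matrix (Fin m) (Fin n) ℝ)
    (Q : Matrix (Fin m) (Fin m) ℝ) (R S : Matrix (Fin n) (Fin n) ℝ)
    (hQ : Q.PosDef) (hR : R.PosDef) (hS : S.PosDef)
    (W : Matrix (Fin n) (Fin n) ℝ) (hW : W = Hᵀ * Q * H + R + S)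
    (r w : Fin m → ℝ)
    (T : (Fin n → ℝ) → (Fin n → ℝ))
    (hT : T = fun u => W⁻¹.mulVec (Hᵀ.mulVec (Q.mulVec (r - w)) + R.mulVec u)) :
    ∃ γ : ℝ, γ < 1 ∧ ∀ u v : Fin n → ℝ,
      Real.sqrt ((T u - T v) ⬝ᵥ W.mulVec (T u - T v))
        ≤ γ * Real.sqrt ((u - v) ⬝ᵥ W.mulVec (u - v)) := by
  -- W is positive definite
  have hP : (Hᵀ * Q * H).PosSemidef := by
    have := hQ.posSemidef.conjTranspose_mul_mul_same H
    simpa using this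
  have hWpd : W.PosDef := by
    rw [hW]
    exact (Matrix.PosDef.posSemidef_add hP hR).add_posSemidef hS.posSemidef
  have hDpd : (W - R).PosDef := by
    have : W - R = Hᵀ * Q * H + S := by rw [hW]; abel
    rw [this]
    exact Matrix.PosDef.posSemidef_add hP hS
  -- difference formula
  have hTdiff : ∀ u v : Fin n → ℝ, T u - T v = W⁻¹ *ᵥ R *ᵥ (u - v) := by
    intro u v
    rw [hT]
    simp only
    rw [← mulVec_sub, add_sub_add_left_eq_sub, ← mulVec_sub]
  rcases Nat.eq_zero_or_pos n with hn | hn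
  · subst hn
    refine ⟨0, by norm_num, fun u v => ?_⟩
    have huv : u = v := Subsingleton.elim u v
    simp [huv]
  · have : NeZero n := ⟨hn.ne'⟩
    -- quadratic forms
    set N : Matrix (Fin n) (Fin n) ℝ := (W⁻¹ * R)ᵀ * W * (W⁻¹ * R) with hN
    have hquad : ∀ x : Fin n → ℝ,
        (W⁻¹ *ᵥ R *ᵥ x) ⬝ᵥ W *ᵥ (W⁻¹ *ᵥ R *ᵥ x) = x ⬝ᵥ N *ᵥ x := by
      intro x
      rw [mulVec_mulVec, quad_form_eq]
    have hquadnn : ∀ x : Fin n → ℝ, 0 ≤ x ⬝ᵥ N *ᵥ x := by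
      intro x
      rw [← hquad]
      have := hWpd.posSemidef.dotProduct_mulVec_nonneg (W⁻¹ *ᵥ R *ᵥ x)
      simpa using this
    set φ : (Fin n → ℝ) → ℝ :=
      fun x => Real.sqrt (x ⬝ᵥ N *ᵥ x) / Real.sqrt (x ⬝ᵥ W *ᵥ x) with hφ
    have hWpos : ∀ x : Fin n → ℝ, x ≠ 0 → 0 < x ⬝ᵥ W *ᵥ x := by
      intro x hx
      have := hWpd.dotProduct_mulVec_pos hx
      simpa using this
    have hsne : ∀ x ∈ Metric.sphere (0 : Fin n → ℝ) 1, x ≠ 0 := by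
      intro x hx
      rw [Metric.mem_sphere, dist_zero_right] at hx
      intro h
      rw [h] at hx; simp at hx
    have hconN : Continuous fun x : Fin n → ℝ => Real.sqrt (x ⬝ᵥ N *ᵥ x) :=
      Real.continuous_sqrt.comp (cont_quad N)
    have hconW : Continuous fun x : Fin n → ℝ => Real.sqrt (x ⬝ᵥ W *ᵥ x) :=
      Real.continuous_sqrt.comp (cont_quad W)
    have hcont : ContinuousOn φ (Metric.sphere (0 : Fin n → ℝ) 1) := by
      apply ContinuousOn.div hconN.continuousOn hconW.continuousOn
      intro x hx
      exact (Real.sqrt_pos.2 (hWpos x (hsne x hx))).ne'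
    have hne : (Metric.sphere (0 : Fin n → ℝ) 1).Nonempty :=
      NormedSpace.sphere_nonempty.2 zero_le_one
    obtain ⟨x₀, hx₀s, hx₀max'⟩ :=
      (isCompact_sphere (0 : Fin n → ℝ) 1).exists_isMaxOn hne hcont
    have hx₀max : ∀ x ∈ Metric.sphere (0 : Fin n → ℝ) 1, φ x ≤ φ x₀ := hx₀max'
    set γ := φ x₀ with hγ
    have hγ0 : 0 ≤ γ := div_nonneg (Real.sqrt_nonneg _) (Real.sqrt_nonneg _)
    have hx₀ne : x₀ ≠ 0 := hsne x₀ hx₀s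
    have hγ1 : γ < 1 := by
      rw [hγ, hφ]
      rw [div_lt_one (Real.sqrt_pos.2 (hWpos x₀ hx₀ne))]
      have hlt := aux_strict hWpd hR hDpd hx₀ne
      rw [hquad x₀] at hlt
      exact Real.sqrt_lt_sqrt (hquadnn x₀) hlt
    refine ⟨γ, hγ1, fun u v => ?_⟩
    rw [hTdiff u v, hquad (u - v)]
    set x := u - v with hxdef
    by_cases hx : x = 0
    · rw [hx]
      simp
    · -- scale to the sphere
      have hnx : 0 < ‖x‖ := norm_pos_iff.2 hx
      set x' : Fin n → ℝ := ‖x‖⁻¹ • x with hx'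
      have hx's : x' ∈ Metric.sphere (0 : Fin n → ℝ) 1 := by
        rw [Metric.mem_sphere, dist_zero_right, hx', norm_smul]
        rw [norm_inv, norm_norm]
        field_simp
      have hxeq : x = ‖x‖ • x' := by
        rw [hx', smul_smul]
        rw [mul_inv_cancel₀ hnx.ne', one_smul]
      have hscale : ∀ (A : Matrix (Fin n) (Fin n) ℝ) (c : ℝ) (z : Fin n → ℝ),
          (c • z) ⬝ᵥ A *ᵥ (c • z) = c ^ 2 * (z ⬝ᵥ A *ᵥ z) := by
        intro A c z
        rw [mulVec_smul, dotProduct_smul, smul_dotProduct, smul_smul, smul_eq_mul]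
        ring
      have h1 : Real.sqrt (x' ⬝ᵥ N *ᵥ x') ≤ γ * Real.sqrt (x' ⬝ᵥ W *ᵥ x') := by
        have := hx₀max x' hx's
        rw [hφ] at this
        rw [div_le_iff₀ (Real.sqrt_pos.2 (hWpos x' (hsne x' hx's)))] at this
        linarith [this]
      calc Real.sqrt (x ⬝ᵥ N *ᵥ x)
          = Real.sqrt (‖x‖ ^ 2 * (x' ⬝ᵥ N *ᵥ x')) := by
            conv_lhs => rw [hxeq, hscale]
        _ = ‖x‖ * Real.sqrt (x' ⬝ᵥ N *ᵥ x') := by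
            rw [Real.sqrt_mul (sq_nonneg _), Real.sqrt_sq hnx.le]
        _ ≤ ‖x‖ * (γ * Real.sqrt (x' ⬝ᵥ W *ᵥ x')) := by
            exact mul_le_mul_of_nonneg_left h1 hnx.le
        _ = γ * (‖x‖ * Real.sqrt (x' ⬝ᵥ W *ᵥ x')) := by ring
        _ = γ * Real.sqrt (x ⬝ᵥ W *ᵥ x) := by
            conv_rhs => rw [hxeq, hscale]
            rw [Real.sqrt_mul (sq_nonneg _), Real.sqrt_sq hnx.le]
end

section
/- Under the assumptions of the previous statement, the ILC iteration u_{k+1} = W^{-1}(HᵀQ(r - w) + Ru_k) has a unique fixed point u* = (HᵀQH + S)^{-1}HᵀQ(r - w), and u_k → u* for any initial u_0. -/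
open Matrix Filter
open scoped MatrixOrder

lemma posDef_conj {n : ℕ} {A : Matrix (Fin n) (Fin n) ℝ} (N : Matrix (Fin n) (Fin n) ℝ)
    (hA : A.PosDef) (hN : IsUnit N.det) : (Nᴴ * A * N).PosDef := by
  refine Matrix.PosDef.of_dotProduct_mulVec_pos ?_ fun x hx => ?_
  · have := hA.isHermitian
    unfold Matrix.IsHermitian at *
    rw [conjTranspose_mul, conjTranspose_mul, conjTranspose_conjTranspose, this, Matrix.mul_assoc]
  · have hinj : Function.Injective (N.mulVec) := mulVec_injective_iff_isUnit.2 (isUnit_iff_isUnit_det N |>.2 hN)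
    have hx' : N *ᵥ x ≠ 0 := by
      intro h
      exact hx (hinj (by simpa using h))
    have key := hA.dotProduct_mulVec_pos hx'
    have e : star x ⬝ᵥ (Nᴴ * A * N) *ᵥ x = star (N *ᵥ x) ⬝ᵥ A *ᵥ (N *ᵥ x) := by
      simp only [star_mulVec, dotProduct_mulVec, vecMul_vecMul, mulVec_mulVec, Matrix.mul_assoc]
    rw [e]
    exact key

lemma eig_lt_one {n : ℕ} {B : Matrix (Fin n) (Fin n) ℝ} (hB : B.IsHermitian)
    (h1 : (1 - B).PosDef) (i : Fin n) : hB.eigenvalues i < 1 := by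
  set v : Fin n → ℝ := ⇑(hB.eigenvectorBasis i) with hv
  have hvne : v ≠ 0 := fun h => hB.eigenvectorBasis.orthonormal.ne_zero i (by ext j; simpa [hv] using congrFun h j)
  have key := h1.dotProduct_mulVec_pos hvne
  have hBv : B *ᵥ v = hB.eigenvalues i • v := hB.mulVec_eigenvectorBasis i
  rw [sub_mulVec, one_mulVec, hBv] at key
  have hsv : star v = v := by ext j; simp
  rw [hsv] at key
  have h2 : v ⬝ᵥ (v - hB.eigenvalues i • v) = (1 - hB.eigenvalues i) * (v ⬝ᵥ v) := by
    rw [dotProduct_sub, dotProduct_smul]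
    ring_nf
  rw [h2] at key
  have hnn : 0 ≤ v ⬝ᵥ v := by
    simp [dotProduct]
    exact Finset.sum_nonneg fun j _ => mul_self_nonneg _
  nlinarith

lemma pow_entry_tendsto {n : ℕ} {B : Matrix (Fin n) (Fin n) ℝ} (hB : B.IsHermitian)
    (hlt : ∀ i, |hB.eigenvalues i| < 1) (P Q' : Matrix (Fin n) (Fin n) ℝ) (i j : Fin n) :
    Tendsto (fun k => (P * B ^ k * Q') i j) atTop (nhds 0) := by
  set U : Matrix (Fin n) (Fin n) ℝ := (hB.eigenvectorUnitary : Matrix (Fin n) (Fin n) ℝ) with hU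
  have hUU : star U * U = 1 := by
    rw [hU]; exact Unitary.star_mul_self_of_mem hB.eigenvectorUnitary.2
  have hUU' : U * star U = 1 := by
    rw [hU]; exact Unitary.mul_star_self_of_mem hB.eigenvectorUnitary.2
  have hUU2 : ∀ X : Matrix (Fin n) (Fin n) ℝ, star U * (U * X) = X := fun X => by
    rw [← Matrix.mul_assoc, hUU, Matrix.one_mul]
  have hspec : B = U * diagonal hB.eigenvalues * star U := by
    have := hB.spectral_theorem
    simpa [Function.comp] using this
  have hpow : ∀ k : ℕ, B ^ k = U * diagonal (fun a => hB.eigenvalues a ^ k) * star U := by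
    intro k
    induction k with
    | zero =>
      simp only [pow_zero]
      rw [diagonal_one, Matrix.mul_one, hUU']
    | succ k ih =>
      have step : B ^ (k+1) = (U * diagonal (fun a => hB.eigenvalues a ^ k) * star U)
          * (U * diagonal hB.eigenvalues * star U) := by
        rw [pow_succ, ih, ← hspec]
      rw [step]
      have hdd : diagonal (fun a => hB.eigenvalues a ^ (k+1))
          = diagonal (fun a => hB.eigenvalues a ^ k) * diagonal hB.eigenvalues := by
        rw [diagonal_mul_diagonal]
        exact congrArg _ (funext fun a => pow_succ _ _)
      rw [hdd]
      simp only [Matrix.mul_assoc, hUU2]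
  have hentry : ∀ k, (P * B ^ k * Q') i j
      = ∑ a, (P * U) i a * hB.eigenvalues a ^ k * ((star U * Q') a j) := by
    intro k
    rw [hpow k]
    have e : P * (U * diagonal (fun a => hB.eigenvalues a ^ k) * star U) * Q'
        = (P * U) * diagonal (fun a => hB.eigenvalues a ^ k) * (star U * Q') := by
      simp only [Matrix.mul_assoc]
    rw [e, Matrix.mul_apply]
    congr 1
    funext a
    rw [Matrix.mul_diagonal]
  simp only [hentry]
  have key : ∀ a : Fin n, Tendsto (fun k => (P * U) i a * hB.eigenvalues a ^ k * ((star U * Q') a j)) atTop (nhds 0) := by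
    intro a
    have h0 : Tendsto (fun k : ℕ => hB.eigenvalues a ^ k) atTop (nhds 0) :=
      tendsto_pow_atTop_nhds_zero_of_abs_lt_one (hlt a)
    simpa using (h0.const_mul ((P * U) i a)).mul_const ((star U * Q') a j)
  simpa using tendsto_finset_sum Finset.univ (fun a _ => key a)
theorem stmt_5 {m n : ℕ} (H : Matrix (Fin m) (Fin n) ℝ)
    (Q : Matrix (Fin m) (Fin m) ℝ) (R S : Matrix (Fin n) (Fin n) ℝ)
    (hQ : Q.PosDef) (hR : R.PosDef) (hS : S.PosDef)
    (W : Matrix (Fin n) (Fin n) ℝ) (hW : W = Hᵀ * Q * H + R + S)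
    (r w : Fin m → ℝ)
    (T : (Fin n → ℝ) → (Fin n → ℝ))
    (hT : T = fun u => W⁻¹.mulVec (Hᵀ.mulVec (Q.mulVec (r - w)) + R.mulVec u))
    (ustar : Fin n → ℝ)
    (hustar : ustar = (Hᵀ * Q * H + S)⁻¹.mulVec (Hᵀ.mulVec (Q.mulVec (r - w)))) :
    T ustar = ustar ∧ (∀ v, T v = v → v = ustar) ∧
      ∀ u0 : Fin n → ℝ,
        Filter.Tendsto (fun k => T^[k] u0) Filter.atTop (nhds ustar) := by
  set c : Fin n → ℝ := Hᵀ *ᵥ (Q *ᵥ (r - w)) with hc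
  set M : Matrix (Fin n) (Fin n) ℝ := Hᵀ * Q * H + S with hMdef
  have hHQH : (Hᵀ * Q * H).PosSemidef := by
    have := hQ.posSemidef.conjTranspose_mul_mul_same H
    simpa [conjTranspose_eq_transpose_of_trivial] using this
  have hM : M.PosDef := Matrix.PosDef.posSemidef_add hHQH hS
  have hWpd : W.PosDef := by
    rw [hW]
    exact (Matrix.PosDef.posSemidef_add hHQH hR).add_posSemidef hS.posSemidef
  have hWdet : IsUnit W.det := hWpd.det_pos.ne'.isUnit
  have hMdet : IsUnit M.det := hM.det_pos.ne'.isUnit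
  have hWMR : W = M + R := by rw [hW, hMdef]; abel
  -- fixed point
  have key1 : T ustar = ustar := by
    simp only [hT, hustar]
    rw [mulVec_mulVec,
      show c + (R * M⁻¹) *ᵥ c = ((1 : Matrix (Fin n) (Fin n) ℝ) + R * M⁻¹) *ᵥ c by
        rw [Matrix.add_mulVec, Matrix.one_mulVec],
      mulVec_mulVec]

    have h1 : (1 : Matrix (Fin n) (Fin n) ℝ) + R * M⁻¹ = W * M⁻¹ := by
      rw [hWMR, Matrix.add_mul, Matrix.mul_nonsing_inv _ hMdet, add_comm]
    rw [h1, ← Matrix.mul_assoc, Matrix.nonsing_inv_mul _ hWdet, Matrix.one_mul]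
  refine ⟨key1, ?_, ?_⟩
  · -- uniqueness
    intro v hv
    simp only [hT] at hv
    have h2 : c + R *ᵥ v = W *ᵥ v := by
      have h := congrArg (fun x => W *ᵥ x) hv
      simp only [mulVec_mulVec] at h
      rwa [Matrix.mul_nonsing_inv _ hWdet, Matrix.one_mulVec] at h
    have h3 : M *ᵥ v = c := by
      have h4 : W *ᵥ v - R *ᵥ v = c := by rw [← h2]; abel
      calc M *ᵥ v = (W - R) *ᵥ v := by rw [show W - R = M from by rw [hWMR]; abel]
        _ = W *ᵥ v - R *ᵥ v := Matrix.sub_mulVec _ _ _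
        _ = c := h4
    rw [hustar, ← h3, mulVec_mulVec, Matrix.nonsing_inv_mul _ hMdet, Matrix.one_mulVec]
  · -- convergence
    set A : Matrix (Fin n) (Fin n) ℝ := W⁻¹ * R with hAdef
    have key1' : W⁻¹ *ᵥ (c + R *ᵥ ustar) = ustar := by
      conv_rhs => rw [← key1]
      simp only [hT]
    have hTaff : ∀ z, T (ustar + z) = ustar + A *ᵥ z := by
      intro z
      simp only [hT]
      rw [Matrix.mulVec_add R, ← add_assoc, Matrix.mulVec_add, key1', mulVec_mulVec]
    have hiter : ∀ u0 : Fin n → ℝ, ∀ k : ℕ, T^[k] u0 = ustar + (A ^ k) *ᵥ (u0 - ustar) := by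
      intro u0 k
      induction k with
      | zero => simp
      | succ k ih =>
        rw [Function.iterate_succ_apply', ih, hTaff, mulVec_mulVec, ← pow_succ']
    -- spectral setup
    have hWinv : W⁻¹.PosDef := hWpd.inv
    set V : Matrix (Fin n) (Fin n) ℝ := CFC.sqrt W⁻¹ with hV
    have hVps : V.PosSemidef := (CFC.sqrt_nonneg W⁻¹).posSemidef
    have hVh : Vᴴ = V := hVps.isHermitian
    have hVV : V * V = W⁻¹ := CFC.sqrt_mul_sqrt_self _ hWinv.posSemidef.nonneg
    have hVdet : IsUnit V.det := by
      have hd : V.det * V.det = W⁻¹.det := by rw [← Matrix.det_mul, hVV]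
      have hne : W⁻¹.det ≠ 0 := hWinv.det_pos.ne'
      exact isUnit_iff_ne_zero.2 (fun h => hne (by rw [← hd, h, mul_zero]))
    have hVinv : V * V⁻¹ = 1 := Matrix.mul_nonsing_inv _ hVdet
    have hVinv' : V⁻¹ * V = 1 := Matrix.nonsing_inv_mul _ hVdet
    set Bm : Matrix (Fin n) (Fin n) ℝ := V * R * V with hBm
    have hBpd : Bm.PosDef := by
      have h := posDef_conj V hR hVdet
      rwa [hVh] at h
    have hWVV : V * W * V = 1 := by
      have hW2 : W = V⁻¹ * V⁻¹ := by
        rw [← Matrix.nonsing_inv_nonsing_inv W hWdet, ← hVV, Matrix.mul_inv_rev]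
      rw [hW2, show V * (V⁻¹ * V⁻¹) * V = (V * V⁻¹) * (V⁻¹ * V) by noncomm_ring,
        hVinv, hVinv', Matrix.one_mul]
    have h1B : (1 - Bm).PosDef := by
      have heq : Vᴴ * M * V = 1 - Bm := by
        have hM2 : M = W - R := by rw [hWMR]; abel
        rw [hVh, hM2, Matrix.mul_sub, Matrix.sub_mul, hWVV, hBm]
      have h := posDef_conj V hM hVdet
      rwa [heq] at h
    have hBh : Bm.IsHermitian := hBpd.isHermitian
    have hlt : ∀ i, |hBh.eigenvalues i| < 1 := by
      intro i
      have hpos : 0 < hBh.eigenvalues i := hBpd.eigenvalues_pos i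
      have hone : hBh.eigenvalues i < 1 := eig_lt_one hBh h1B i
      rw [abs_lt]
      exact ⟨by linarith, hone⟩
    have hcan : ∀ X : Matrix (Fin n) (Fin n) ℝ, V⁻¹ * (V * X) = X := fun X => by
      rw [← Matrix.mul_assoc, hVinv', Matrix.one_mul]
    have base : A = V * Bm * V⁻¹ := by
      rw [hAdef, hBm, ← hVV,
        show V * (V * R * V) * V⁻¹ = (V * V * R) * (V * V⁻¹) by noncomm_ring,
        hVinv, Matrix.mul_one]
    have hAeq : ∀ k : ℕ, A ^ k = V * Bm ^ k * V⁻¹ := by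
      intro k
      induction k with
      | zero => rw [pow_zero, pow_zero, Matrix.mul_one, hVinv]
      | succ k ih =>
        rw [pow_succ, ih, base, pow_succ]
        simp only [Matrix.mul_assoc, hcan]
    intro u0
    simp only [hiter u0]
    rw [tendsto_pi_nhds]
    intro i
    simp only [Pi.add_apply]
    have hz : Tendsto (fun k => ((A ^ k) *ᵥ (u0 - ustar)) i) atTop (nhds 0) := by
      have hm : ∀ k : ℕ, ((A ^ k) *ᵥ (u0 - ustar)) i
          = ∑ j, (V * Bm ^ k * V⁻¹) i j * (u0 - ustar) j := by
        intro k
        rw [hAeq k]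
        simp [Matrix.mulVec, dotProduct, mul_sub]
      simp only [hm]
      have hterm := fun j => (pow_entry_tendsto hBh hlt V V⁻¹ i j).mul_const ((u0 - ustar) j)
      simpa using tendsto_finset_sum Finset.univ (fun j _ => hterm j)
    simpa using tendsto_const_nhds.add hz
end

section
/- Let Z ⊆ Z' be two finite feature sets (datasets) and k a positive semidefinite kernel, σ² > 0. For any test point z, the GPR posterior variance computed with the larger dataset is no larger: K_zz - K_{zZ'}(K_{Z'Z'} + σ²I)^{-1}K_{Z'z} ≤ K_zz - K_{zZ}(K_{ZZ} + σ²I)^{-1}K_{Zz}. -/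
open Matrix

noncomputable section

variable {N N' : ℕ}

/-- Expand a vector on `Fin N` to `Fin N'` along an embedding, zero elsewhere. -/
def expand (e : Fin N ↪ Fin N') (u : Fin N → ℝ) : Fin N' → ℝ :=
  fun j => ∑ i, if e i = j then u i else 0

lemma expand_apply (e : Fin N ↪ Fin N') (u : Fin N → ℝ) (i : Fin N) :
    expand e u (e i) = u i := by
  simp [expand]

lemma expand_dot (e : Fin N ↪ Fin N') (u : Fin N → ℝ) (v : Fin N' → ℝ) :
    expand e u ⬝ᵥ v = u ⬝ᵥ (v ∘ e) := by
  simp only [expand, dotProduct, Function.comp, Finset.sum_mul, ite_mul, zero_mul]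
  rw [Finset.sum_comm]
  simp

lemma dot_expand (e : Fin N ↪ Fin N') (u : Fin N → ℝ) (v : Fin N' → ℝ) :
    v ⬝ᵥ expand e u = (v ∘ e) ⬝ᵥ u := by
  rw [dotProduct_comm, expand_dot, dotProduct_comm]

lemma mulVec_expand (e : Fin N ↪ Fin N') (A : Matrix (Fin N') (Fin N') ℝ)
    (u : Fin N → ℝ) (i : Fin N) :
    (A *ᵥ expand e u) (e i) = ((A.submatrix e e) *ᵥ u) i := by
  show (fun j => A (e i) j) ⬝ᵥ expand e u = _
  rw [dot_expand]
  rfl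

lemma expand_quad (e : Fin N ↪ Fin N') (A : Matrix (Fin N') (Fin N') ℝ)
    (u : Fin N → ℝ) :
    expand e u ⬝ᵥ A *ᵥ expand e u = u ⬝ᵥ (A.submatrix e e) *ᵥ u := by
  rw [expand_dot]
  congr 1
  ext i
  exact mulVec_expand e A u i

lemma posdef_submatrix {A : Matrix (Fin N') (Fin N') ℝ} (hA : A.PosDef)
    (e : Fin N ↪ Fin N') : (A.submatrix e e).PosDef := by
  refine Matrix.PosDef.of_dotProduct_mulVec_pos (hA.1.submatrix e) fun x hx => ?_
  have hw : expand e x ≠ 0 := by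
    intro h
    apply hx
    funext i
    have := congrFun h (e i)
    simpa [expand_apply] using this
  have := hA.dotProduct_mulVec_pos hw
  simpa [expand_quad] using this

lemma key_ineq {A : Matrix (Fin N') (Fin N') ℝ} (hA : A.PosDef)
    (e : Fin N ↪ Fin N') (v : Fin N' → ℝ) :
    (v ∘ e) ⬝ᵥ (A.submatrix e e)⁻¹ *ᵥ (v ∘ e) ≤ v ⬝ᵥ A⁻¹ *ᵥ v := by
  set B := A.submatrix e e with hBdef
  have hB : B.PosDef := posdef_submatrix hA e
  set u : Fin N → ℝ := B⁻¹ *ᵥ (v ∘ e) with hu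
  set w : Fin N' → ℝ := expand e u with hwdef
  set s : Fin N' → ℝ := A⁻¹ *ᵥ v with hs
  have hAinv : A * A⁻¹ = 1 := Matrix.mul_nonsing_inv _ hA.det_pos.ne'.isUnit
  have hBinv : B * B⁻¹ = 1 := Matrix.mul_nonsing_inv _ hB.det_pos.ne'.isUnit
  have hAs : A *ᵥ s = v := by rw [hs, mulVec_mulVec, hAinv, one_mulVec]
  have hBu : B *ᵥ u = v ∘ e := by rw [hu, mulVec_mulVec, hBinv, one_mulVec]
  have h0 : 0 ≤ (s - w) ⬝ᵥ A *ᵥ (s - w) := by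
    have := hA.posSemidef.dotProduct_mulVec_nonneg (s - w); rwa [star_trivial] at this
  have e1 : s ⬝ᵥ A *ᵥ s = v ⬝ᵥ A⁻¹ *ᵥ v := by
    rw [hAs, dotProduct_comm]
  have e2 : w ⬝ᵥ A *ᵥ s = u ⬝ᵥ (v ∘ e) := by
    rw [hAs, hwdef, expand_dot]
  have hsymA : Aᵀ = A := by
    rw [← Matrix.conjTranspose_eq_transpose_of_trivial]; exact hA.1
  have e3 : s ⬝ᵥ A *ᵥ w = u ⬝ᵥ (v ∘ e) := by
    rw [dotProduct_mulVec, ← mulVec_transpose, hsymA, hAs, hwdef, dot_expand,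
      dotProduct_comm]
  have e4 : w ⬝ᵥ A *ᵥ w = u ⬝ᵥ (v ∘ e) := by
    rw [hwdef, expand_quad, ← hBdef, hBu]
  have e5 : (v ∘ e) ⬝ᵥ B⁻¹ *ᵥ (v ∘ e) = u ⬝ᵥ (v ∘ e) := by
    rw [← hu, dotProduct_comm]
  have expand0 : (s - w) ⬝ᵥ A *ᵥ (s - w)
      = s ⬝ᵥ A *ᵥ s - s ⬝ᵥ A *ᵥ w - w ⬝ᵥ A *ᵥ s + w ⬝ᵥ A *ᵥ w := by
    simp only [sub_dotProduct, mulVec_sub, dotProduct_sub]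
    ring
  rw [expand0, e1, e2, e3, e4] at h0
  rw [e5]
  linarith

end

theorem stmt_10 {α : Type*} (k : α → α → ℝ)
    (hsymm : ∀ a b, k a b = k b a)
    (hpsd : ∀ (M : ℕ) (f : Fin M → α),
      (Matrix.of fun i j => k (f i) (f j)).PosSemidef)
    (σ2 : ℝ) (hσ : 0 < σ2) (z : α)
    {N N' : ℕ} (e : Fin N ↪ Fin N') (x' : Fin N' → α)
    (x : Fin N → α) (hx : x = x' ∘ e) :
    k z z - (fun i => k z (x' i)) ⬝ᵥ
        ((Matrix.of fun i j => k (x' i) (x' j)) + σ2 • 1)⁻¹.mulVec (fun i => k (x' i) z)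
      ≤ k z z - (fun i => k z (x i)) ⬝ᵥ
        ((Matrix.of fun i j => k (x i) (x j)) + σ2 • 1)⁻¹.mulVec (fun i => k (x i) z) := by
  subst hx
  set A : Matrix (Fin N') (Fin N') ℝ :=
    (Matrix.of fun i j => k (x' i) (x' j)) + σ2 • 1 with hA
  have hApd : A.PosDef := by
    have h1 : (σ2 • (1 : Matrix (Fin N') (Fin N') ℝ)).PosDef := by
      rw [smul_one_eq_diagonal]
      exact Matrix.posDef_diagonal_iff.mpr fun _ => hσ
    exact Matrix.PosDef.posSemidef_add (hpsd N' x') h1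
  have hsub : (Matrix.of fun i j => k (x' (e i)) (x' (e j))) + σ2 • 1
      = A.submatrix e e := by
    rw [hA, submatrix_add]
    congr 1
    rw [smul_one_eq_diagonal, smul_one_eq_diagonal]
    ext i j
    simp [Matrix.submatrix, Matrix.diagonal, e.injective.eq_iff]
  set v : Fin N' → ℝ := fun i => k (x' i) z with hv
  have hrow : (fun i => k z (x' i)) = v := by
    funext i; rw [hv, hsymm]
  have hrow2 : (fun i => k z ((x' ∘ e) i)) = v ∘ e := by
    funext i; simp [hv, hsymm]
  have hcol2 : (fun i => k ((x' ∘ e) i) z) = v ∘ e := by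
    funext i; simp [hv]
  have hmat : (Matrix.of fun i j => k ((x' ∘ e) i) ((x' ∘ e) j)) + σ2 • 1
      = A.submatrix e e := hsub
  rw [hrow, hrow2, hcol2, hmat]
  have := key_ineq hApd e v
  linarith
end

section
/- If the test point z equals one of the dataset features z^i, then the GPR posterior variance satisfies cov(z|D) = K_zz - K_{zZ}(K_{ZZ}+σ²I)^{-1}K_{Zz} ≤ σ² · (K_zz)/(K_zz + σ²) ≤ σ² for any positive semidefinite kernel, where the bound in the one-point-dataset case is an equality. -/
open Matrix

theorem stmt_11 {α : Type*} (k : α → α → ℝ)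
    (hsymm : ∀ a b, k a b = k b a)
    (hpsd : ∀ (M : ℕ) (f : Fin M → α),
      (Matrix.of fun i j => k (f i) (f j)).PosSemidef)
    (σ2 : ℝ) (hσ : 0 < σ2) (z : α)
    {N : ℕ} (x : Fin N → α) (i0 : Fin N) (hz : x i0 = z)
    (cov : ℝ)
    (hcov : cov = k z z - (fun i => k z (x i)) ⬝ᵥ
      ((Matrix.of fun i j => k (x i) (x j)) + σ2 • 1)⁻¹.mulVec (fun i => k (x i) z)) :
    (cov ≤ σ2 * k z z / (k z z + σ2) ∧ cov ≤ σ2) ∧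
      ∀ x1 : Fin 1 → α, x1 0 = z →
        k z z - (fun i => k z (x1 i)) ⬝ᵥ
            ((Matrix.of fun i j => k (x1 i) (x1 j)) + σ2 • 1)⁻¹.mulVec (fun i => k (x1 i) z)
          = σ2 * k z z / (k z z + σ2) := by
  classical
  subst hz
  set c : ℝ := k (x i0) (x i0) with hc
  have hce : 0 ≤ c := by
    have := (hpsd 1 fun _ => x i0).dotProduct_mulVec_nonneg fun _ => 1
    simpa [dotProduct, Matrix.mulVec, Fin.sum_univ_one] using this
  have hcσ : 0 < c + σ2 := by linarith
  constructor
  · -- the general bound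
    set K : Matrix (Fin N) (Fin N) ℝ := Matrix.of fun i j => k (x i) (x j) with hK
    set A : Matrix (Fin N) (Fin N) ℝ := K + σ2 • 1 with hA
    have hKps : K.PosSemidef := hpsd N x
    have hApd : A.PosDef :=
      Matrix.PosDef.posSemidef_add hKps
        (by rw [Matrix.smul_one_eq_diagonal]; exact Matrix.PosDef.diagonal fun _ => hσ)
    have hAdet : IsUnit A.det := hApd.det_pos.ne'.isUnit
    have hAinv : A⁻¹.PosDef := hApd.inv
    have hsymA : Aᵀ = A := by
      have h := hApd.isHermitian
      rw [← Matrix.conjTranspose_eq_transpose_of_trivial]; exact h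
    set e : Fin N → ℝ := Pi.single i0 1 with he
    have hene : e ≠ 0 := by
      intro h
      have := congrFun h i0
      simp [he] at this
    set y : Fin N → ℝ := A⁻¹ *ᵥ e with hy
    set v : Fin N → ℝ := fun i => k (x i) (x i0) with hv
    set B : ℝ := e ⬝ᵥ y with hB
    have hAe : A *ᵥ e = v + σ2 • e := by
      funext i
      simp only [hA, he, Matrix.add_mulVec, Matrix.mulVec_single, Pi.add_apply,
        Matrix.smul_mulVec, Pi.smul_apply, smul_eq_mul, Matrix.one_mulVec, hK,
        Matrix.of_apply, mul_one, hv]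
      rw [Pi.single_apply]
      by_cases hi : i = i0 <;> simp [hi]
    have hAy : A *ᵥ y = e := by
      rw [hy, Matrix.mulVec_mulVec, Matrix.mul_nonsing_inv A hAdet, Matrix.one_mulVec]
    have dsym : ∀ (u w : Fin N → ℝ), u ⬝ᵥ (A *ᵥ w) = (A *ᵥ u) ⬝ᵥ w := by
      intro u w
      rw [Matrix.dotProduct_mulVec, ← Matrix.mulVec_transpose, hsymA]
    have hee : e ⬝ᵥ e = 1 := by
      rw [he, dotProduct_single]
      simp
    have hve : v ⬝ᵥ e = c := by
      rw [he, dotProduct_single]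
      simp [hv, hc]
    have hev : e ⬝ᵥ v = c := by rw [dotProduct_comm]; exact hve
    have hBpos : 0 < B := by
      have := hAinv.dotProduct_mulVec_pos hene
      simpa [hB, hy] using this
    have hBne : B ≠ 0 := hBpos.ne'
    have hAey : (A *ᵥ e) ⬝ᵥ y = 1 := by
      rw [← dsym, hAy, hee]
    have hyAe : y ⬝ᵥ (A *ᵥ e) = 1 := by rw [dotProduct_comm]; exact hAey
    have hvy : v ⬝ᵥ y = 1 - σ2 * B := by
      have : v = A *ᵥ e - σ2 • e := by rw [hAe]; abel
      rw [this, sub_dotProduct, hAey, smul_dotProduct, ← hB, smul_eq_mul]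
    have heAe : e ⬝ᵥ (A *ᵥ e) = c + σ2 := by
      rw [hAe, dotProduct_add, hev, dotProduct_smul, hee, smul_eq_mul, mul_one]
    have hyAy : y ⬝ᵥ (A *ᵥ y) = B := by
      rw [hAy, dotProduct_comm]
    -- quadratic form bound gives (c+σ2)⁻¹ ≤ B
    have heAy : e ⬝ᵥ (A *ᵥ y) = 1 := by rw [dsym]; exact hAey
    have hq : 0 ≤ c + σ2 - B⁻¹ := by
      have h0 := hApd.posSemidef.dotProduct_mulVec_nonneg (e - B⁻¹ • y)
      have hexp : (e - B⁻¹ • y) ⬝ᵥ (A *ᵥ (e - B⁻¹ • y)) = c + σ2 - B⁻¹ := by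
        simp only [Matrix.mulVec_sub, Matrix.mulVec_smul, sub_dotProduct,
          dotProduct_sub, smul_dotProduct, dotProduct_smul,
          heAe, heAy, hyAe, hyAy, smul_eq_mul]
        field_simp
        ring
      rw [star_trivial, hexp] at h0
      exact h0
    have hBinv : B⁻¹ ≤ c + σ2 := by linarith
    have hBge : (c + σ2)⁻¹ ≤ B := by
      have := inv_anti₀ (inv_pos.mpr hBpos) hBinv
      rwa [inv_inv] at this
    have hcovval : cov = σ2 - σ2 ^ 2 * B := by
      rw [hcov]
      have h1 : (fun i => k (x i0) (x i)) = v := by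
        funext i; rw [hv]; exact hsymm _ _
      rw [h1]
      have hAiv : A⁻¹ *ᵥ v = e - σ2 • y := by
        have : v = A *ᵥ e - σ2 • e := by rw [hAe]; abel
        rw [this, Matrix.mulVec_sub, Matrix.mulVec_mulVec,
          Matrix.nonsing_inv_mul A hAdet, Matrix.one_mulVec, Matrix.mulVec_smul, ← hy]
      rw [hAiv, dotProduct_sub, hve, dotProduct_smul, hvy]
      simp only [smul_eq_mul, ← hc]
      ring
    have hmul : 1 ≤ (c + σ2) * B := by
      have := mul_le_mul_of_nonneg_left hBge hcσ.le
      rwa [mul_inv_cancel₀ hcσ.ne'] at this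
    constructor
    · rw [hcovval, le_div_iff₀ hcσ]
      nlinarith [sq_nonneg σ2, mul_le_mul_of_nonneg_left hmul (sq_nonneg σ2)]
    · rw [hcovval]
      nlinarith [hBpos, sq_nonneg σ2]
  · -- the one-point case
    intro x1 hx1
    have hx1' : x1 = fun _ => x i0 := by
      funext j
      rw [Subsingleton.elim j 0, hx1]
    subst hx1'
    set A1 : Matrix (Fin 1) (Fin 1) ℝ :=
      (Matrix.of fun i j => k (x i0) (x i0)) + σ2 • 1 with hA1
    have hA1e : A1 0 0 = c + σ2 := by
      simp [hA1, Matrix.one_apply, hc]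
    have hinv : A1⁻¹ 0 0 = (c + σ2)⁻¹ := by
      rw [Matrix.inv_def, Matrix.adjugate_fin_one, Matrix.det_fin_one, Ring.inverse_eq_inv]
      simp [hA1e, Matrix.one_apply]
    show k (x i0) (x i0) - _ = _
    rw [show ((fun i : Fin 1 => k (x i0) (x i0)) ⬝ᵥ
        A1⁻¹ *ᵥ fun i : Fin 1 => k (x i0) (x i0))
        = c * (A1⁻¹ 0 0 * c) by
      simp [dotProduct, Matrix.mulVec, Fin.sum_univ_one, hc]]
    rw [hinv, ← hc]
    field_simp
    ring
end
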